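/- Let V be unimodular admissible, α ∈ ℤ^d \ {0} with #U_α = ϱ_V + 1 where U_α = {v ∈ V : α·v ≠ 0}, and β a multi-index with |β| = ϱ_V + 1. Then D^β B̂_V(α) = (∏_{v ∈ U_α} 1/(α·v)) · D^β(∏_{v ∈ U_α} (x·v))|_{x = α}, where the last derivative is of the homogeneous polynomial x ↦ ∏_{v∈U_α}(x·v). -/

import Mathlib

open MeasureTheory Complex Finset
open scoped Real Classical

noncomputable section

/-- `g(t) = (1 - e^{-2πit})/(2πit)` with `g(0) = 1`. -/
def gfun (t : ℝ) : ℂ :=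
  if t = 0 then 1 else
    (1 - Complex.exp (-2 * Real.pi * Complex.I * t)) / (2 * Real.pi * Complex.I * t)

variable {d : ℕ} {ι : Type*}

/-- dot product of an integer vector with a real vector -/
def dotIR (α : Fin d → ℤ) (x : Fin d → ℝ) : ℝ := ∑ i, (α i : ℝ) * x i

/-- integer dot product -/
def dotII (α w : Fin d → ℤ) : ℤ := ∑ i, α i * w i

/-- cast of an integer vector to a real vector -/
def castV (v : Fin d → ℤ) : Fin d → ℝ := fun i => (v i : ℝ)

/-- `V` (indexed by the finset `V` via `v`) consists of nonzero integer vectors spanning `ℝ^d` -/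
def Admissible (V : Finset ι) (v : ι → Fin d → ℤ) : Prop :=
  (∀ j ∈ V, v j ≠ 0) ∧
    Submodule.span ℝ ((fun j => castV (v j)) '' (V : Set ι)) = ⊤

/-- `ϱ_V` : the largest `r` such that deleting any `r` vectors leaves a spanning set. -/
def rhoV (V : Finset ι) (v : ι → Fin d → ℤ) : ℕ :=
  sSup {r : ℕ | ∀ W ⊆ V, W.card = r →
    Submodule.span ℝ ((fun j => castV (v j)) '' ((V \ W : Finset ι) : Set ι)) = ⊤}

/-- membership in the family `Λ` -/
def InLambda (V : Finset ι) (v : ι → Fin d → ℤ) (U : Finset ι) : Prop :=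
  U ⊆ V ∧ U.card = rhoV V v + 1 ∧
    Submodule.span ℝ ((fun j => castV (v j)) '' ((V \ U : Finset ι) : Set ι)) ≠ ⊤

/-- unimodularity: every `d`-subfamily has determinant of absolute value at most 1 -/
def Unimodular (V : Finset ι) (v : ι → Fin d → ℤ) : Prop :=
  ∀ w : Fin d → ι, Function.Injective w → (∀ i, w i ∈ V) →
    |Matrix.det (fun i k => v (w i) k)| ≤ 1

/-- the Fourier transform of the box spline, `∏_{v∈V} g(x⋅v)` -/
def hatB (V : Finset ι) (v : ι → Fin d → ℤ) (x : Fin d → ℝ) : ℂ :=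
  ∏ j ∈ V, gfun (dotIR (v j) x)

/-- partial derivative in direction `i` -/
def pderivC (i : Fin d) (f : (Fin d → ℝ) → ℂ) : (Fin d → ℝ) → ℂ :=
  fun x => fderiv ℝ f x (Pi.single i 1)

/-- `D^β`, the multi-index partial derivative -/
def Dmulti (β : Fin d → ℕ) (f : (Fin d → ℝ) → ℂ) : (Fin d → ℝ) → ℂ :=
  (List.finRange d).foldr (fun i F => (pderivC i)^[β i] F) f

/-- directional derivative `D_w` -/
def dirDeriv (w : Fin d → ℝ) (f : (Fin d → ℝ) → ℂ) : (Fin d → ℝ) → ℂ :=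
  fun x => fderiv ℝ f x w

/-- `D_U = ∏_{v∈U} D_v` (real vectors version) -/
def DUder (U : Finset ι) (v : ι → Fin d → ℝ) (f : (Fin d → ℝ) → ℂ) : (Fin d → ℝ) → ℂ :=
  U.toList.foldr (fun j F => dirDeriv (v j) F) f

/-- the `k`-th Bernoulli function `B^k(t) = ∑_{n≠0} e^{2πint}/(2πin)^k` -/
def Bern (k : ℕ) (t : ℝ) : ℂ :=
  ∑' n : ℤ, if n = 0 then 0 else
    Complex.exp (2 * Real.pi * Complex.I * n * t) / (2 * Real.pi * Complex.I * n) ^ k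

/-- the Bernoulli spline `B(V,U)` -/
def BVU (V U : Finset ι) (v : ι → Fin d → ℤ) (x : Fin d → ℝ) : ℂ :=
  ∑' α : Fin d → ℤ,
    if α ≠ 0 ∧ ∀ j ∈ V \ U, dotII α (v j) = 0 then
      (∏ j ∈ U, (1 : ℂ) / (2 * Real.pi * Complex.I * (dotII α (v j) : ℤ))) *
        Complex.exp (2 * Real.pi * Complex.I * dotIR α x)
    else 0

/-- the homogeneous polynomial `x ↦ ∏_{v∈U}(x⋅v)` (real vectors version) -/
def polyU (U : Finset ι) (v : ι → Fin d → ℝ) (x : Fin d → ℝ) : ℂ :=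
  ∏ j ∈ U, ((∑ i, x i * v j i : ℝ) : ℂ)

/-- `C(β,U) = D^β (∏_{v∈U} (x⋅v))`, a constant (evaluated at `0`) -/
def Cconst (U : Finset ι) (v : ι → Fin d → ℤ) (β : Fin d → ℕ) : ℂ :=
  Dmulti β (polyU U fun j => castV (v j)) 0

/-- `L_β`, given by its Fourier expansion (Lemma 2.1);
equals `P([]^β) - []^β` for the box-spline orthogonal projection `P`. -/
def Lfun (V : Finset ι) (v : ι → Fin d → ℤ) (β : Fin d → ℕ) (x : Fin d → ℝ) : ℂ :=
  (1 / (2 * Real.pi * Complex.I)) ^ (∑ i, β i) *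
    ∑' α : Fin d → ℤ, if α ≠ 0 then
      Dmulti β (hatB V v) (castV α) *
        Complex.exp (2 * Real.pi * Complex.I * dotIR α x)
    else 0

/-- the unit cube in `ℝ^d` -/
def unitCube (d : ℕ) : Set (Fin d → ℝ) := Set.univ.pi fun _ : Fin d => Set.Icc (0:ℝ) 1

namespace S7

lemma diff_dslope {f : ℂ → ℂ} (hf : Differentiable ℂ f) (c : ℂ) :
    Differentiable ℂ (dslope f c) := by
  intro z
  rcases eq_or_ne z c with rfl | h
  · obtain ⟨p, hp⟩ := hf.analyticAt z
    exact hp.has_fpower_series_dslope_fslope.analyticAt.differentiableAt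
  · exact (differentiableAt_dslope_of_ne h).2 (hf z)

def Fent : ℂ → ℂ := fun w => 1 - Complex.exp (-(2 * Real.pi * Complex.I) * w)

lemma diff_Fent : Differentiable ℂ Fent := by
  unfold Fent; fun_prop

def Gfull : ℂ → ℂ := fun z => (2 * Real.pi * Complex.I)⁻¹ * dslope Fent 0 z

lemma diff_Gfull : Differentiable ℂ Gfull :=
  (diff_dslope diff_Fent 0).const_mul _

lemma twopiI_ne : (2 * Real.pi * Complex.I : ℂ) ≠ 0 := by
  simp [Real.pi_ne_zero, Complex.I_ne_zero]

lemma deriv_Fent (z : ℂ) :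
    deriv Fent z = (2 * Real.pi * Complex.I) * Complex.exp (-(2 * Real.pi * Complex.I) * z) := by
  have h1 : HasDerivAt (fun w : ℂ => -(2 * Real.pi * Complex.I) * w)
      (-(2 * Real.pi * Complex.I)) z := by
    simpa using (hasDerivAt_id z).const_mul (-(2 * Real.pi * Complex.I) : ℂ)
  have h2 := h1.cexp
  have h3 := (hasDerivAt_const z (1:ℂ)).sub h2
  have h4 : deriv Fent z =
      0 - Complex.exp (-(2 * Real.pi * Complex.I) * z) * -(2 * Real.pi * Complex.I) :=
    HasDerivAt.deriv h3
  rw [h4]; ring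

lemma Fent_zero : Fent 0 = 0 := by simp [Fent]

lemma Gfull_eq (t : ℝ) : gfun t = Gfull (t : ℂ) := by
  rcases eq_or_ne t 0 with rfl | ht
  · rw [gfun, if_pos rfl, Gfull]
    push_cast
    rw [dslope_same, deriv_Fent]
    rw [mul_zero, Complex.exp_zero, mul_one]
    field_simp
  · have ht' : (t : ℂ) ≠ 0 := by exact_mod_cast ht
    rw [gfun, if_neg ht, Gfull, dslope_of_ne _ ht', slope_def_field, Fent_zero]
    field_simp [Fent]
    simp only [Fent, sub_zero]; ring_nf


lemma Gfull_int_zero {n : ℤ} (hn : n ≠ 0) : Gfull (n : ℂ) = 0 := by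
  have : Complex.exp (-(2 * Real.pi * Complex.I) * (n : ℂ)) = 1 := by
    rw [show (-(2 * Real.pi * Complex.I) * (n : ℂ)) = (-n : ℤ) * (2 * Real.pi * Complex.I) by
      push_cast; ring]
    exact Complex.exp_int_mul_two_pi_mul_I (-n)
  have hn' : ((n : ℝ) : ℂ) = (n : ℂ) := by push_cast; ring
  rw [← hn', ← Gfull_eq, gfun, if_neg (by exact_mod_cast hn)]
  rw [show (-2 * (Real.pi:ℂ) * Complex.I * ((n:ℝ):ℂ)) = -(2 * Real.pi * Complex.I) * (n:ℂ) by
    push_cast; ring, this]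
  simp

lemma deriv_Gfull_int {n : ℤ} (hn : n ≠ 0) : deriv Gfull (n : ℂ) = ((n : ℂ))⁻¹ := by
  have hn' : (n : ℂ) ≠ 0 := by exact_mod_cast hn
  have hev : Gfull =ᶠ[nhds (n : ℂ)] fun z =>
      (2 * Real.pi * Complex.I)⁻¹ * (z⁻¹ * Fent z) := by
    filter_upwards [eventually_ne_nhds hn'] with z hz
    rw [Gfull, dslope_of_ne _ hz, slope_def_field, Fent_zero]
    field_simp
    ring
  rw [hev.deriv_eq]
  have h1 : HasDerivAt (fun w : ℂ => -(2 * Real.pi * Complex.I) * w)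
      (-(2 * Real.pi * Complex.I)) (n : ℂ) := by
    simpa using (hasDerivAt_id (n : ℂ)).const_mul (-(2 * Real.pi * Complex.I) : ℂ)
  have h2 : HasDerivAt Fent
      (0 - Complex.exp (-(2 * Real.pi * Complex.I) * (n:ℂ)) * -(2 * Real.pi * Complex.I)) (n:ℂ) :=
    (hasDerivAt_const _ (1:ℂ)).sub h1.cexp
  have h3 : HasDerivAt (fun z : ℂ => z⁻¹) (-((n:ℂ)^2)⁻¹) (n:ℂ) := by
    simpa using hasDerivAt_inv hn'
  have h4 := (h3.mul h2).const_mul ((2 * Real.pi * Complex.I)⁻¹ : ℂ)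
  rw [(show HasDerivAt (fun z : ℂ => (2 * Real.pi * Complex.I)⁻¹ * (z⁻¹ * Fent z)) _ (n:ℂ) from h4).deriv]
  have hexp : Complex.exp (-(2 * Real.pi * Complex.I) * (n : ℂ)) = 1 := by
    rw [show (-(2 * Real.pi * Complex.I) * (n : ℂ)) = (-n : ℤ) * (2 * Real.pi * Complex.I) by
      push_cast; ring]
    exact Complex.exp_int_mul_two_pi_mul_I (-n)
  have hFn : Fent (n : ℂ) = 0 := by unfold Fent; rw [hexp]; ring
  rw [hFn, hexp]
  have hpi : ((Real.pi : ℂ)) ≠ 0 := Complex.ofReal_ne_zero.mpr Real.pi_ne_zero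
  field_simp
  ring

lemma dslope_Gfull_self {n : ℤ} (hn : n ≠ 0) : dslope Gfull (n : ℂ) (n : ℂ) = ((n : ℂ))⁻¹ := by
  rw [dslope_same, deriv_Gfull_int hn]

lemma Gfull_factor {n : ℤ} (hn : n ≠ 0) (z : ℂ) :
    Gfull z = (z - (n : ℂ)) * dslope Gfull (n : ℂ) z := by
  have := sub_smul_dslope Gfull (n : ℂ) z
  rw [Gfull_int_zero hn, sub_zero] at this
  rw [← this]; simp [smul_eq_mul]

lemma Gfull_zero : Gfull 0 = 1 := by
  have h := (Gfull_eq 0).symm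
  rw [Complex.ofReal_zero] at h
  rw [h, gfun, if_pos rfl]

lemma contDiff_Gfull : ContDiff ℝ (⊤:ℕ∞) Gfull :=
  (diff_Gfull.contDiff).restrict_scalars ℝ

lemma contDiff_dslope_Gfull (c : ℂ) : ContDiff ℝ (⊤:ℕ∞) (dslope Gfull c) :=
  ((diff_dslope diff_Gfull c).contDiff).restrict_scalars ℝ

end S7

namespace S7
open Finset

variable {d : ℕ} {ι : Type*}

/-- iterated directional (coordinate) derivative along a list -/
def DL (L : List (Fin d)) (f : (Fin d → ℝ) → ℂ) : (Fin d → ℝ) → ℂ :=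
  L.foldr (fun i F => pderivC i F) f

lemma DL_nil (f : (Fin d → ℝ) → ℂ) : DL ([] : List (Fin d)) f = f := rfl

lemma DL_cons (i : Fin d) (L : List (Fin d)) (f : (Fin d → ℝ) → ℂ) :
    DL (i :: L) f = pderivC i (DL L f) := rfl

lemma DL_append (L₁ L₂ : List (Fin d)) (f : (Fin d → ℝ) → ℂ) :
    DL (L₁ ++ L₂) f = DL L₁ (DL L₂ f) := by
  simp [DL, List.foldr_append]

lemma DL_concat (L : List (Fin d)) (i : Fin d) (f : (Fin d → ℝ) → ℂ) :
    DL (L ++ [i]) f = DL L (pderivC i f) := DL_append L [i] f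

lemma hle1 : ((⊤:ℕ∞) : WithTop ℕ∞) ≠ 0 := by simp

lemma pderivC_contDiff {f : (Fin d → ℝ) → ℂ} (hf : ContDiff ℝ (⊤:ℕ∞) f) (i : Fin d) :
    ContDiff ℝ (⊤:ℕ∞) (pderivC i f) :=
  (hf.fderiv_right (by simp)).clm_apply contDiff_const

lemma DL_contDiff (L : List (Fin d)) {f : (Fin d → ℝ) → ℂ} (hf : ContDiff ℝ (⊤:ℕ∞) f) :
    ContDiff ℝ (⊤:ℕ∞) (DL L f) := by
  induction L with
  | nil => exact hf
  | cons i L ih => exact pderivC_contDiff ih i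

lemma pderivC_add {f g : (Fin d → ℝ) → ℂ} (hf : ContDiff ℝ (⊤:ℕ∞) f)
    (hg : ContDiff ℝ (⊤:ℕ∞) g) (i : Fin d) :
    pderivC i (fun x => f x + g x) = fun x => pderivC i f x + pderivC i g x := by
  funext x
  unfold pderivC
  rw [fderiv_fun_add ((hf.differentiable hle1) x) ((hg.differentiable hle1) x)]
  rfl

lemma pderivC_const_mul {f : (Fin d → ℝ) → ℂ} (hf : ContDiff ℝ (⊤:ℕ∞) f) (c : ℂ) (i : Fin d) :
    pderivC i (fun x => c * f x) = fun x => c * pderivC i f x := by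
  funext x
  unfold pderivC
  rw [fderiv_const_mul ((hf.differentiable hle1) x) c]
  rfl

lemma pderivC_zero (i : Fin d) :
    pderivC i (fun _ : Fin d → ℝ => (0:ℂ)) = fun _ => 0 := by
  funext x
  unfold pderivC
  rw [fderiv_fun_const]
  rfl

lemma pderivC_mul {f g : (Fin d → ℝ) → ℂ} (hf : ContDiff ℝ (⊤:ℕ∞) f)
    (hg : ContDiff ℝ (⊤:ℕ∞) g) (i : Fin d) :
    pderivC i (fun x => f x * g x) = fun x => pderivC i f x * g x + f x * pderivC i g x := by
  funext x
  unfold pderivC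
  rw [fderiv_fun_mul ((hf.differentiable hle1) x) ((hg.differentiable hle1) x)]
  simp only [ContinuousLinearMap.add_apply, ContinuousLinearMap.smul_apply, smul_eq_mul]
  ring

lemma DL_add (L : List (Fin d)) {f g : (Fin d → ℝ) → ℂ} (hf : ContDiff ℝ (⊤:ℕ∞) f)
    (hg : ContDiff ℝ (⊤:ℕ∞) g) :
    DL L (fun x => f x + g x) = fun x => DL L f x + DL L g x := by
  induction L with
  | nil => rfl
  | cons i L ih =>
    rw [DL_cons, DL_cons, DL_cons, ih]
    exact pderivC_add (DL_contDiff L hf) (DL_contDiff L hg) i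

lemma DL_const_mul (L : List (Fin d)) {f : (Fin d → ℝ) → ℂ} (hf : ContDiff ℝ (⊤:ℕ∞) f) (c : ℂ) :
    DL L (fun x => c * f x) = fun x => c * DL L f x := by
  induction L with
  | nil => rfl
  | cons i L ih =>
    rw [DL_cons, DL_cons, ih]
    exact pderivC_const_mul (DL_contDiff L hf) c i

lemma DL_zero (L : List (Fin d)) : DL L (fun _ : Fin d → ℝ => (0:ℂ)) = fun _ => 0 := by
  induction L with
  | nil => rfl
  | cons i L ih =>
    rw [DL_cons, ih]
    exact pderivC_zero i

lemma DL_sum {κ : Type*} (L : List (Fin d)) (s : Finset κ) (F : κ → (Fin d → ℝ) → ℂ)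
    (hF : ∀ j ∈ s, ContDiff ℝ (⊤:ℕ∞) (F j)) :
    DL L (fun x => ∑ j ∈ s, F j x) = fun x => ∑ j ∈ s, DL L (F j) x := by
  classical
  induction s using Finset.induction_on with
  | empty => simpa using DL_zero L
  | insert a s' hnot ih =>
    have h1 : DL L (fun x => F a x + ∑ j ∈ s', F j x)
        = fun x => DL L (F a) x + DL L (fun x => ∑ j ∈ s', F j x) x :=
      DL_add L (hF a (Finset.mem_insert_self a s'))
        (ContDiff.sum fun j hj => hF j (Finset.mem_insert_of_mem hj))
    simp only [Finset.sum_insert hnot]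
    rw [h1, ih (fun j hj => hF j (Finset.mem_insert_of_mem hj))]

/-- the continuous linear functional `x ↦ ∑ i, x i * w i` (complex valued) -/
def phi (w : Fin d → ℝ) : (Fin d → ℝ) →L[ℝ] ℂ :=
  ∑ i, ((w i : ℂ) • (Complex.ofRealCLM.comp (ContinuousLinearMap.proj i)))

lemma phi_apply (w : Fin d → ℝ) (x : Fin d → ℝ) :
    phi w x = ((∑ i, x i * w i : ℝ) : ℂ) := by
  simp only [phi, ContinuousLinearMap.sum_apply, ContinuousLinearMap.smul_apply,
    ContinuousLinearMap.comp_apply, ContinuousLinearMap.proj_apply,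
    Complex.ofRealCLM_apply, smul_eq_mul]
  push_cast
  exact Finset.sum_congr rfl fun i _ => mul_comm _ _

/-- the affine function `x ↦ (∑ i, x i * w i) + b` -/
def lin (w : Fin d → ℝ) (b : ℂ) : (Fin d → ℝ) → ℂ :=
  fun x => ((∑ i, x i * w i : ℝ) : ℂ) + b

lemma lin_eq (w : Fin d → ℝ) (b : ℂ) : lin w b = fun x => phi w x + b := by
  funext x; rw [phi_apply]; rfl

lemma contDiff_lin (w : Fin d → ℝ) (b : ℂ) : ContDiff ℝ (⊤:ℕ∞) (lin w b) := by
  rw [lin_eq]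
  exact (phi w).contDiff.add contDiff_const

lemma hasFDerivAt_lin (w : Fin d → ℝ) (b : ℂ) (x : Fin d → ℝ) :
    HasFDerivAt (lin w b) (phi w) x := by
  rw [lin_eq]
  exact ((phi w).hasFDerivAt).add_const b

lemma phi_single (w : Fin d → ℝ) (i : Fin d) : phi w (Pi.single i 1) = (w i : ℂ) := by
  rw [phi_apply]
  norm_cast
  simp [Pi.single_apply, ite_mul]

/-- product of affine functions over a finset -/
def lpr (U : Finset ι) (w : ι → Fin d → ℝ) (b : ι → ℂ) : (Fin d → ℝ) → ℂ :=
  fun x => ∏ j ∈ U, lin (w j) (b j) x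

lemma contDiff_lpr (U : Finset ι) (w : ι → Fin d → ℝ) (b : ι → ℂ) :
    ContDiff ℝ (⊤:ℕ∞) (lpr U w b) :=
  contDiff_prod fun j _ => contDiff_lin (w j) (b j)

lemma pderivC_lpr (U : Finset ι) (w : ι → Fin d → ℝ) (b : ι → ℂ) (i : Fin d) :
    pderivC i (lpr U w b) = fun x => ∑ j ∈ U, (w j i : ℂ) * lpr (U.erase j) w b x := by
  classical
  funext x
  unfold pderivC lpr
  rw [fderiv_finset_prod fun j _ => (((contDiff_lin (w j) (b j)).differentiable hle1) x)]
  simp only [ContinuousLinearMap.sum_apply, ContinuousLinearMap.smul_apply, smul_eq_mul]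
  refine Finset.sum_congr rfl fun j hj => ?_
  rw [(hasFDerivAt_lin (w j) (b j) x).fderiv, phi_single]
  ring

end S7


namespace S7
open Finset

variable {d : ℕ} {ι : Type*}

/-- key step: one partial derivative of `lpr * R` -/
lemma pderivC_lpr_mul (U : Finset ι) (w : ι → Fin d → ℝ) (b : ι → ℂ)
    {R : (Fin d → ℝ) → ℂ} (hR : ContDiff ℝ (⊤:ℕ∞) R) (i : Fin d) :
    pderivC i (fun x => lpr U w b x * R x) =
      fun x => (∑ j ∈ U, (w j i : ℂ) * (lpr (U.erase j) w b x * R x))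
        + lpr U w b x * pderivC i R x := by
  rw [pderivC_mul (contDiff_lpr U w b) hR, pderivC_lpr]
  funext x
  rw [Finset.sum_mul]
  simp only [mul_assoc]

/-- Lemma A: if fewer derivatives than vanishing linear factors, the value is `0`. -/
lemma lemA (xα : Fin d → ℝ) (w : ι → Fin d → ℝ) (L : List (Fin d)) :
    ∀ (U : Finset ι) (b : ι → ℂ) (R : (Fin d → ℝ) → ℂ), ContDiff ℝ (⊤:ℕ∞) R →
    (∀ j ∈ U, lin (w j) (b j) xα = 0) → L.length < U.card →
    DL L (fun x => lpr U w b x * R x) xα = 0 := by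
  classical
  induction L using List.reverseRecOn with
  | nil =>
    intro U b R hR hvan hlt
    obtain ⟨j, hj⟩ := Finset.card_pos.mp (lt_of_le_of_lt (Nat.zero_le _) hlt)
    show lpr U w b xα * R xα = 0
    rw [show lpr U w b xα = 0 from Finset.prod_eq_zero hj (hvan j hj), zero_mul]
  | append_singleton L i ih =>
    intro U b R hR hvan hlt
    rw [DL_concat, pderivC_lpr_mul U w b hR i]
    have hcd1 : ∀ j ∈ U, ContDiff ℝ (⊤:ℕ∞)
        (fun x => (w j i : ℂ) * (lpr (U.erase j) w b x * R x)) :=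
      fun j _ => contDiff_const.mul ((contDiff_lpr _ w b).mul hR)
    have hsum : ContDiff ℝ (⊤:ℕ∞)
        (fun x => ∑ j ∈ U, (w j i : ℂ) * (lpr (U.erase j) w b x * R x)) :=
      ContDiff.sum hcd1
    have hlast : ContDiff ℝ (⊤:ℕ∞) (fun x => lpr U w b x * pderivC i R x) :=
      (contDiff_lpr U w b).mul (pderivC_contDiff hR i)
    rw [DL_add L hsum hlast]
    have hlen : L.length + 1 < U.card := by simpa using hlt
    have h1 : DL L (fun x => ∑ j ∈ U, (w j i : ℂ) * (lpr (U.erase j) w b x * R x)) xα = 0 := by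
      rw [DL_sum L U _ hcd1]
      refine Finset.sum_eq_zero fun j hj => ?_
      rw [DL_const_mul L ((contDiff_lpr _ w b).mul hR) _]
      have : DL L (fun x => lpr (U.erase j) w b x * R x) xα = 0 := by
        refine ih (U.erase j) b R hR (fun j' hj' => hvan j' (Finset.mem_of_mem_erase hj')) ?_
        rw [Finset.card_erase_of_mem hj]
        omega
      beta_reduce
      rw [this, mul_zero]
    have h2 : DL L (fun x => lpr U w b x * pderivC i R x) xα = 0 :=
      ih U b (pderivC i R) (pderivC_contDiff hR i) hvan (by omega)
    simp [h1, h2]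

/-- Lemma B: with exactly as many derivatives as vanishing factors. -/
lemma lemB (xα y : Fin d → ℝ) (w : ι → Fin d → ℝ) (L : List (Fin d)) :
    ∀ (U : Finset ι) (b b' : ι → ℂ) (R : (Fin d → ℝ) → ℂ), ContDiff ℝ (⊤:ℕ∞) R →
    (∀ j ∈ U, lin (w j) (b j) xα = 0) → L.length = U.card →
    DL L (fun x => lpr U w b x * R x) xα = DL L (lpr U w b') y * R xα := by
  classical
  induction L using List.reverseRecOn with
  | nil =>
    intro U b b' R hR hvan hlen
    have hU : U = ∅ := Finset.card_eq_zero.mp (by simpa using hlen.symm)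
    subst hU
    show lpr ∅ w b xα * R xα = lpr ∅ w b' y * R xα
    simp [lpr]
  | append_singleton L i ih =>
    intro U b b' R hR hvan hlen
    rw [DL_concat, DL_concat, pderivC_lpr_mul U w b hR i, pderivC_lpr U w b' i]
    have hcd1 : ∀ j ∈ U, ContDiff ℝ (⊤:ℕ∞)
        (fun x => (w j i : ℂ) * (lpr (U.erase j) w b x * R x)) :=
      fun j _ => contDiff_const.mul ((contDiff_lpr _ w b).mul hR)
    have hcd1' : ∀ j ∈ U, ContDiff ℝ (⊤:ℕ∞)
        (fun x => (w j i : ℂ) * lpr (U.erase j) w b' x) :=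
      fun j _ => contDiff_const.mul (contDiff_lpr _ w b')
    have hlast : ContDiff ℝ (⊤:ℕ∞) (fun x => lpr U w b x * pderivC i R x) :=
      (contDiff_lpr U w b).mul (pderivC_contDiff hR i)
    rw [DL_add L (ContDiff.sum hcd1) hlast, DL_sum L U _ hcd1, DL_sum L U _ hcd1']
    have hlen' : L.length + 1 = U.card := by simpa using hlen
    have h2 : DL L (fun x => lpr U w b x * pderivC i R x) xα = 0 :=
      lemA xα w L U b (pderivC i R) (pderivC_contDiff hR i) hvan (by omega)
    beta_reduce
    rw [h2, add_zero, Finset.sum_mul]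
    refine Finset.sum_congr rfl fun j hj => ?_
    rw [DL_const_mul L ((contDiff_lpr _ w b).mul hR) _,
        DL_const_mul L (contDiff_lpr _ w b') _]
    beta_reduce
    have := ih (U.erase j) b b' R hR (fun j' hj' => hvan j' (Finset.mem_of_mem_erase hj'))
      (by rw [Finset.card_erase_of_mem hj]; omega)
    rw [this]
    ring

/-- `Dmulti` as a list-fold of single partial derivatives -/
lemma Dmulti_eq_DL (β : Fin d → ℕ) (f : (Fin d → ℝ) → ℂ) :
    Dmulti β f = DL ((List.finRange d).flatMap fun i => List.replicate (β i) i) f := by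
  unfold Dmulti
  have hrep : ∀ (n : ℕ) (i : Fin d) (g : (Fin d → ℝ) → ℂ),
      DL (List.replicate n i) g = (pderivC i)^[n] g := by
    intro n i g
    induction n with
    | zero => rfl
    | succ n ihn =>
      rw [List.replicate_succ, DL_cons, ihn, Function.iterate_succ_apply']
  have : ∀ l : List (Fin d),
      l.foldr (fun i F => (pderivC i)^[β i] F) f
        = DL (l.flatMap fun i => List.replicate (β i) i) f := by
    intro l
    induction l with
    | nil => rfl
    | cons i l ihl =>
      rw [List.foldr_cons, List.flatMap_cons, DL_append, ← ihl, hrep]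
  exact this _

lemma length_flat (β : Fin d → ℕ) :
    ((List.finRange d).flatMap fun i => List.replicate (β i) i).length = ∑ i, β i := by
  rw [List.length_flatMap, Fin.sum_univ_def]
  congr 1
  simp [Function.comp]

end S7


/-- formula (12): `D^β B̂_V(α) = ∏_{v∈U_α} (α⋅v)⁻¹ ⋅ D^β(∏_{v∈U_α}(x⋅v))|_{x=α}`. -/
theorem statement7 {d : ℕ} {ι : Type*} (V : Finset ι) (v : ι → Fin d → ℤ)
    (hadm : Admissible V v) (huni : Unimodular V v)
    (α : Fin d → ℤ) (hα : α ≠ 0)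
    (β : Fin d → ℕ) (hβ : ∑ i, β i = rhoV V v + 1)
    (hcard : (V.filter fun j => dotII α (v j) ≠ 0).card = rhoV V v + 1) :
    Dmulti β (hatB V v) (castV α) =
      (∏ j ∈ V.filter fun j => dotII α (v j) ≠ 0, (1 : ℂ) / (dotII α (v j) : ℤ)) *
        Dmulti β (polyU (V.filter fun j => dotII α (v j) ≠ 0) fun j => castV (v j))
          (castV α) := by
  classical
  set U : Finset ι := V.filter (fun j => dotII α (v j) ≠ 0) with hUdef
  set w : ι → Fin d → ℝ := fun j => castV (v j) with hwdef
  set b : ι → ℂ := fun j => -((dotII α (v j) : ℂ)) with hbdef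
  set R : (Fin d → ℝ) → ℂ := fun x =>
    (∏ j ∈ U, dslope S7.Gfull ((dotII α (v j) : ℂ)) (((dotIR (v j) x : ℝ)) : ℂ)) *
      ∏ j ∈ V.filter (fun j => ¬ dotII α (v j) ≠ 0), S7.Gfull (((dotIR (v j) x : ℝ)) : ℂ)
    with hRdef
  have hinner : ∀ j : ι, ContDiff ℝ (⊤:ℕ∞) (fun x : Fin d → ℝ => ((dotIR (v j) x : ℝ) : ℂ)) := by
    intro j
    have heq : (fun x : Fin d → ℝ => ((dotIR (v j) x : ℝ) : ℂ)) = S7.lin (castV (v j)) 0 := by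
      funext x
      show ((dotIR (v j) x : ℝ) : ℂ) = ((∑ i, x i * castV (v j) i : ℝ) : ℂ) + 0
      rw [add_zero]
      congr 1
      simp [dotIR, castV, mul_comm]
    rw [heq]
    exact S7.contDiff_lin _ _
  have hdot : ∀ j : ι, dotIR (v j) (castV α) = ((dotII α (v j) : ℤ) : ℝ) := by
    intro j
    unfold dotIR dotII castV
    push_cast
    exact Finset.sum_congr rfl fun i _ => mul_comm _ _
  have hR : ContDiff ℝ (⊤:ℕ∞) R := by
    rw [hRdef]
    refine ContDiff.mul (contDiff_prod fun j _ => ?_) (contDiff_prod fun j _ => ?_)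
    · exact (S7.contDiff_dslope_Gfull _).comp (hinner j)
    · exact S7.contDiff_Gfull.comp (hinner j)
  have hvan : ∀ j ∈ U, S7.lin (w j) (b j) (castV α) = 0 := by
    intro j _
    show ((∑ i, castV α i * w j i : ℝ) : ℂ) + b j = 0
    have hs : (∑ i, castV α i * w j i : ℝ) = ((dotII α (v j) : ℤ) : ℝ) := by
      simp only [hwdef]
      unfold castV dotII
      push_cast
      rfl
    rw [hs, hbdef]
    push_cast
    ring
  have hhat : hatB V v = fun x => S7.lpr U w b x * R x := by
    funext x
    unfold hatB
    rw [← Finset.prod_filter_mul_prod_filter_not V (fun j => dotII α (v j) ≠ 0), ← hUdef]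
    have hfac : ∀ j ∈ U, gfun (dotIR (v j) x) =
        S7.lin (w j) (b j) x *
          dslope S7.Gfull ((dotII α (v j) : ℂ)) (((dotIR (v j) x : ℝ)) : ℂ) := by
      intro j hj
      have hne : dotII α (v j) ≠ 0 := (Finset.mem_filter.mp hj).2
      rw [S7.Gfull_eq, S7.Gfull_factor hne]
      congr 1
      show ((dotIR (v j) x : ℝ) : ℂ) - ((dotII α (v j) : ℤ) : ℂ)
        = ((∑ i, x i * w j i : ℝ) : ℂ) + b j
      rw [hbdef, sub_eq_add_neg]
      congr 2
      simp only [hwdef]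
      congr 1
      simp [dotIR, castV, mul_comm]
    have hgf : ∀ j ∈ V.filter (fun j => ¬ dotII α (v j) ≠ 0),
        gfun (dotIR (v j) x) = S7.Gfull (((dotIR (v j) x : ℝ)) : ℂ) :=
      fun j _ => S7.Gfull_eq _
    rw [Finset.prod_congr rfl hfac, Finset.prod_mul_distrib, Finset.prod_congr rfl hgf,
      mul_assoc]
    rfl
  have hScard : U.card = rhoV V v + 1 := by rw [hUdef]; exact hcard
  have hlen : ((List.finRange d).flatMap fun i => List.replicate (β i) i).length = U.card := by
    rw [S7.length_flat, hβ, hScard]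
  have hRval : R (castV α) = ∏ j ∈ U, ((dotII α (v j) : ℂ))⁻¹ := by
    rw [hRdef]
    show (∏ j ∈ U, dslope S7.Gfull ((dotII α (v j) : ℂ)) (((dotIR (v j) (castV α) : ℝ)) : ℂ)) *
        (∏ j ∈ V.filter (fun j => ¬ dotII α (v j) ≠ 0),
          S7.Gfull (((dotIR (v j) (castV α) : ℝ)) : ℂ)) = _
    have h1 : ∀ j : ι, (((dotIR (v j) (castV α) : ℝ)) : ℂ) = ((dotII α (v j) : ℂ)) := by
      intro j
      rw [hdot j]
      push_cast
      ring
    have hp1 : ∀ j ∈ U, dslope S7.Gfull ((dotII α (v j) : ℂ))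
        (((dotIR (v j) (castV α) : ℝ)) : ℂ) = ((dotII α (v j) : ℂ))⁻¹ := by
      intro j hj
      have hne : dotII α (v j) ≠ 0 := (Finset.mem_filter.mp hj).2
      rw [h1 j]
      exact S7.dslope_Gfull_self hne
    have hp2 : ∀ j ∈ V.filter (fun j => ¬ dotII α (v j) ≠ 0),
        S7.Gfull (((dotIR (v j) (castV α) : ℝ)) : ℂ) = 1 := by
      intro j hj
      have h0 : dotII α (v j) = 0 := by
        have := (Finset.mem_filter.mp hj).2
        tauto
      rw [h1 j, h0]
      push_cast
      exact S7.Gfull_zero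
    rw [Finset.prod_congr rfl hp1, Finset.prod_congr rfl hp2, Finset.prod_const_one, mul_one]
  have hpoly : S7.lpr U w (fun _ => (0:ℂ)) = polyU U (fun j => castV (v j)) := by
    funext x
    unfold S7.lpr polyU
    refine Finset.prod_congr rfl fun j _ => ?_
    show ((∑ i, x i * w j i : ℝ) : ℂ) + 0 = _
    rw [add_zero, hwdef]
  rw [S7.Dmulti_eq_DL, S7.Dmulti_eq_DL, hhat]
  rw [S7.lemB (castV α) (castV α) w _ U b (fun _ => (0:ℂ)) R hR hvan hlen]
  rw [hpoly, hRval]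
  rw [Finset.prod_congr rfl (fun (j : ι) (_ : j ∈ U) =>
    (one_div ((dotII α (v j) : ℂ))).symm)]
  ring

end
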